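/- Let A ∈ B^{n×n}, λ ∈ B, K, L a partition of N = {1,...,n}, L_1 = { i ∈ L : max_{j∈L} a_{ij} ≥ λ }, L^{>λ,L_1} = { k ∈ L : max_{i∈L_1} a_{ik} > λ }, L^{>λ,K} = { ℓ ∈ L : max_{k∈K} ((A_{KK})^* ⊗ A_{KL})_{kℓ} > λ }, L' = L^{>λ,L_1} ∪ L^{>λ,K} and L̃ = L \ L'. Then the set of vectors x_L ∈ B^L satisfying x_L ≥ λ·1_L, A_{L_1 L} ⊗ x_L = λ·1_{L_1}, and (A_{KK})^* ⊗ A_{KL} ⊗ x_L ≤ λ·1_K equals S_L(λ) = { x_L : x_ℓ = λ for ℓ ∈ L', λ ≤ x_ℓ ≤ 1 for ℓ ∈ L̃ } = { λ·1_L ⊕ Λ_{L,L̃} ⊗ z : z ∈ B^{|L̃|} }, where Λ ∈ B^{n×n} has Λ_{ii} = 1 and Λ_{ij} = λ for i ≠ j, and Λ_{L,L̃} is its submatrix with rows in L and columns in L̃. -/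
import Mathlib


noncomputable section

/-- The max-min algebra: the unit interval `[0,1] ⊆ ℝ` with `⊕ = max = ⊔` and `⊗ = min = ⊓`. -/
abbrev B : Type := unitInterval

instance : Fact ((0:ℝ) ≤ 1) := ⟨zero_le_one⟩

/-- Max-min matrix-vector product: `(A ⊗ x)_i = max_j min (A i j) (x j)`. -/
def mmVec {α β : Type*} (A : Matrix α β B) (x : β → B) : α → B :=
  fun i => ⨆ j, A i j ⊓ x j

/-- Max-min matrix-matrix product. -/
def mmMul {α β γ : Type*} (A : Matrix α β B) (C : Matrix β γ B) : Matrix α γ B :=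
  fun i k => ⨆ j, A i j ⊓ C j k

/-- The max-min identity matrix. -/
def mmId (α : Type*) [DecidableEq α] : Matrix α α B :=
  fun i j => if i = j then 1 else 0

/-- Max-min matrix powers, `A^0 = I`. -/
def mmPow {α : Type*} [DecidableEq α] (A : Matrix α α B) : ℕ → Matrix α α B
  | 0 => mmId α
  | k + 1 => mmMul A (mmPow A k)

/-- The metric matrix `A⁺ = A ⊕ A² ⊕ ... ⊕ Aⁿ`. -/
def mmPlus {α : Type*} [Fintype α] [DecidableEq α] (A : Matrix α α B) : Matrix α α B :=
  fun i j => ⨆ k ∈ Finset.Icc 1 (Fintype.card α), mmPow A k i j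

/-- The Kleene star `A* = I ⊕ A ⊕ ... ⊕ A^{n-1}`. -/
def mmStar {α : Type*} [Fintype α] [DecidableEq α] (A : Matrix α α B) : Matrix α α B :=
  fun i j => ⨆ k ∈ Finset.range (Fintype.card α), mmPow A k i j

/-- Submatrix of `A` with rows in `P` and columns in `Q`. -/
def subM {n : ℕ} (A : Matrix (Fin n) (Fin n) B) (P Q : Finset (Fin n)) :
    Matrix ↥P ↥Q B :=
  fun i j => A i j

/-- Subvector of `x` indexed by `P`. -/
def subV {n : ℕ} (x : Fin n → B) (P : Finset (Fin n)) : ↥P → B :=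
  fun i => x i

/-- `x` is a `(K,L)` `λ`-eigenvector of `A`: `A ⊗ x = λ ⊗ x`, `x_i ≤ λ` for `i ∈ K`,
`x_i ≥ λ` for `i ∈ L`. -/
def IsKLEig {n : ℕ} (A : Matrix (Fin n) (Fin n) B) (lam : B) (K L : Finset (Fin n))
    (x : Fin n → B) : Prop :=
  mmVec A x = (fun i => lam ⊓ x i) ∧ (∀ i ∈ K, x i ≤ lam) ∧ (∀ i ∈ L, lam ≤ x i)

/-- `L₁ = {i ∈ L : max_{j∈L} a_{ij} ≥ λ}`. -/
def L1set {n : ℕ} (A : Matrix (Fin n) (Fin n) B) (lam : B) (L : Finset (Fin n)) :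
    Finset (Fin n) :=
  L.filter fun i => lam ≤ ⨆ j ∈ L, A i j

/-- `L₂ = {i ∈ L : max_{j∈L} a_{ij} < λ}`. -/
def L2set {n : ℕ} (A : Matrix (Fin n) (Fin n) B) (lam : B) (L : Finset (Fin n)) :
    Finset (Fin n) :=
  L.filter fun i => (⨆ j ∈ L, A i j) < lam

/-- `L^{>λ,L₁} = {k ∈ L : max_{i ∈ L₁} a_{ik} > λ}`. -/
def LgtL1set {n : ℕ} (A : Matrix (Fin n) (Fin n) B) (lam : B) (L : Finset (Fin n)) :
    Finset (Fin n) :=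
  L.filter fun k => lam < ⨆ i ∈ L1set A lam L, A i k

/-- `L^{>λ,K} = {ℓ ∈ L : max_{k ∈ K} ((A_{KK})* ⊗ A_{KL})_{kℓ} > λ}`. (The matrix
`(A_{KK})* ⊗ A_{K,N}` has, for `ℓ ∈ L`, exactly the same entries in column `ℓ` as
`(A_{KK})* ⊗ A_{KL}`.) -/
def LgtKset {n : ℕ} (A : Matrix (Fin n) (Fin n) B) (lam : B) (K L : Finset (Fin n)) :
    Finset (Fin n) :=
  L.filter fun ℓ =>
    lam < ⨆ k : ↥K, mmMul (mmStar (subM A K K)) (fun (p : ↥K) (q : Fin n) => A p q) k ℓ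

/-- `L' = L^{>λ,L₁} ∪ L^{>λ,K}`. -/
def LprimeSet {n : ℕ} (A : Matrix (Fin n) (Fin n) B) (lam : B) (K L : Finset (Fin n)) :
    Finset (Fin n) :=
  LgtL1set A lam L ∪ LgtKset A lam K L

/-- `L̃ = L \ L'`. -/
def LtilSet {n : ℕ} (A : Matrix (Fin n) (Fin n) B) (lam : B) (K L : Finset (Fin n)) :
    Finset (Fin n) :=
  L \ LprimeSet A lam K L

/-- The submatrix `Λ_{P,Q}` of the matrix `Λ` with `Λ_{ii} = 1` and `Λ_{ij} = λ` for `i ≠ j`. -/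
def LamSub {n : ℕ} (lam : B) (P Q : Finset (Fin n)) : Matrix ↥P ↥Q B :=
  fun p q => if (p : Fin n) = (q : Fin n) then 1 else lam

section Aux

variable {n : ℕ} (A : Matrix (Fin n) (Fin n) B) (lam : B) (K L : Finset (Fin n))

private lemma B_le_one (x : B) : x ≤ 1 := x.2.2

private lemma lemA (xL : ↥L → B) :
    ((∀ i, lam ≤ xL i) ∧
      (∀ i : ↥(L1set A lam L), mmVec (subM A (L1set A lam L) L) xL i = lam) ∧
      (∀ i : ↥K, mmVec (mmMul (mmStar (subM A K K)) (subM A K L)) xL i ≤ lam)) ↔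
        ((∀ ℓ : ↥L, (ℓ : Fin n) ∈ LprimeSet A lam K L → xL ℓ = lam) ∧
         (∀ ℓ : ↥L, (ℓ : Fin n) ∈ LtilSet A lam K L → lam ≤ xL ℓ ∧ xL ℓ ≤ 1)) := by
  constructor
  · rintro ⟨h1, h2, h3⟩
    refine ⟨?_, fun ℓ _ => ⟨h1 ℓ, B_le_one _⟩⟩
    intro ℓ hℓ
    refine le_antisymm ?_ (h1 ℓ)
    by_contra hx
    push_neg at hx
    rcases Finset.mem_union.mp hℓ with h | h
    · obtain ⟨hℓL, hlt⟩ := Finset.mem_filter.mp h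
      simp only [lt_iSup_iff] at hlt
      obtain ⟨i, hi, hlt⟩ := hlt
      have hterm : A i (ℓ : Fin n) ⊓ xL ℓ ≤ lam :=
        le_trans (le_iSup (fun j : ↥L => A i (j : Fin n) ⊓ xL j) ℓ)
          (le_of_eq (h2 ⟨i, hi⟩))
      exact absurd hterm (not_le.mpr (lt_inf_iff.mpr ⟨hlt, hx⟩))
    · obtain ⟨hℓL, hlt⟩ := Finset.mem_filter.mp h
      rw [lt_iSup_iff] at hlt
      obtain ⟨k, hlt⟩ := hlt
      have hterm : mmMul (mmStar (subM A K K)) (subM A K L) k ℓ ⊓ xL ℓ ≤ lam :=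
        le_trans (le_iSup (fun j : ↥L =>
          mmMul (mmStar (subM A K K)) (subM A K L) k j ⊓ xL j) ℓ) (h3 k)
      exact absurd hterm (not_le.mpr (lt_inf_iff.mpr ⟨hlt, hx⟩))
  · rintro ⟨hP, hT⟩
    have h1 : ∀ ℓ : ↥L, lam ≤ xL ℓ := by
      intro ℓ
      by_cases h : (ℓ : Fin n) ∈ LprimeSet A lam K L
      · exact le_of_eq (hP ℓ h).symm
      · exact (hT ℓ (Finset.mem_sdiff.mpr ⟨ℓ.2, h⟩)).1
    refine ⟨h1, ?_, ?_⟩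
    · intro i
      obtain ⟨hiL, hige⟩ := Finset.mem_filter.mp i.2
      refine le_antisymm (iSup_le fun j => ?_) ?_
      · by_cases h : (j : Fin n) ∈ LprimeSet A lam K L
        · exact le_trans inf_le_right (le_of_eq (hP j h))
        · have hnot : (j : Fin n) ∉ LgtL1set A lam L := fun hc =>
            h (Finset.mem_union_left _ hc)
          have hle : (⨆ i' ∈ L1set A lam L, A i' (j : Fin n)) ≤ lam := by
            by_contra hc
            exact hnot (Finset.mem_filter.mpr ⟨j.2, not_le.mp hc⟩)
          have : A (i : Fin n) (j : Fin n) ≤ lam :=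
            le_trans (le_iSup₂ (f := fun i' (_ : i' ∈ L1set A lam L) =>
              A i' (j : Fin n)) (i : Fin n) i.2) hle
          exact le_trans inf_le_left this
      · have key : (⨆ j ∈ L, A (i : Fin n) j) = ⨆ j : ↥L, A (i : Fin n) (j : Fin n) :=
          iSup_subtype'
        calc lam = (⨆ j : ↥L, A (i : Fin n) (j : Fin n)) ⊓ lam := by
              rw [← key]; exact (inf_eq_right.mpr hige).symm
          _ = ⨆ j : ↥L, A (i : Fin n) (j : Fin n) ⊓ lam := iSup_inf_eq _ _
          _ ≤ ⨆ j : ↥L, A (i : Fin n) (j : Fin n) ⊓ xL j :=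
              iSup_mono fun j => inf_le_inf_left _ (h1 j)
    · intro k
      refine iSup_le fun j => ?_
      by_cases h : (j : Fin n) ∈ LprimeSet A lam K L
      · exact le_trans inf_le_right (le_of_eq (hP j h))
      · have hnot : (j : Fin n) ∉ LgtKset A lam K L := fun hc =>
          h (Finset.mem_union_right _ hc)
        have hle : (⨆ k' : ↥K, mmMul (mmStar (subM A K K))
            (fun (p : ↥K) (q : Fin n) => A p q) k' (j : Fin n)) ≤ lam := by
          by_contra hc
          exact hnot (Finset.mem_filter.mpr ⟨j.2, not_le.mp hc⟩)
        have : mmMul (mmStar (subM A K K)) (subM A K L) k j ≤ lam :=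
          le_trans (le_iSup (fun k' : ↥K => mmMul (mmStar (subM A K K))
            (fun (p : ↥K) (q : Fin n) => A p q) k' (j : Fin n)) k) hle
        exact le_trans inf_le_left this

private lemma lemB (xL : ↥L → B) :
    ((∀ ℓ : ↥L, (ℓ : Fin n) ∈ LprimeSet A lam K L → xL ℓ = lam) ∧
     (∀ ℓ : ↥L, (ℓ : Fin n) ∈ LtilSet A lam K L → lam ≤ xL ℓ ∧ xL ℓ ≤ 1)) ↔
      (∃ z : ↥(LtilSet A lam K L) → B,
        xL = fun ℓ => lam ⊔ mmVec (LamSub lam L (LtilSet A lam K L)) z ℓ) := by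
  constructor
  · rintro ⟨hP, hT⟩
    refine ⟨fun q => xL ⟨(q : Fin n), (Finset.mem_sdiff.mp q.2).1⟩, ?_⟩
    funext ℓ
    show xL ℓ = lam ⊔ ⨆ q : ↥(LtilSet A lam K L), LamSub lam L (LtilSet A lam K L) ℓ q ⊓ _
    by_cases h : (ℓ : Fin n) ∈ LprimeSet A lam K L
    · rw [hP ℓ h]
      refine (sup_eq_left.mpr (iSup_le fun q => ?_)).symm
      have hne : (ℓ : Fin n) ≠ (q : Fin n) := by
        intro he
        have : (ℓ : Fin n) ∈ LtilSet A lam K L := he ▸ q.2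
        exact (Finset.mem_sdiff.mp this).2 h
      simp only [LamSub, if_neg hne]
      exact inf_le_left
    · have hℓt : (ℓ : Fin n) ∈ LtilSet A lam K L := Finset.mem_sdiff.mpr ⟨ℓ.2, h⟩
      obtain ⟨hge, hle1⟩ := hT ℓ hℓt
      refine le_antisymm ?_ ?_
      · refine le_trans ?_ le_sup_right
        refine le_trans ?_ (le_iSup _ (⟨(ℓ : Fin n), hℓt⟩ : ↥(LtilSet A lam K L)))
        simp only [LamSub, if_pos rfl]
        exact le_inf (B_le_one _) le_rfl
      · refine sup_le hge (iSup_le fun q => ?_)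
        by_cases he : (ℓ : Fin n) = (q : Fin n)
        · simp only [LamSub, if_pos he]
          have : xL ⟨(q : Fin n), (Finset.mem_sdiff.mp q.2).1⟩ = xL ℓ := by
            congr 1
            exact Subtype.ext he.symm
          rw [this]
          exact inf_le_right
        · simp only [LamSub, if_neg he]
          exact le_trans inf_le_left hge
  · rintro ⟨z, rfl⟩
    constructor
    · intro ℓ h
      show lam ⊔ (⨆ q : ↥(LtilSet A lam K L), LamSub lam L (LtilSet A lam K L) ℓ q ⊓ z q) = lam
      refine sup_eq_left.mpr (iSup_le fun q => ?_)
      have hne : (ℓ : Fin n) ≠ (q : Fin n) := by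
        intro he
        have : (ℓ : Fin n) ∈ LtilSet A lam K L := he ▸ q.2
        exact (Finset.mem_sdiff.mp this).2 h
      simp only [LamSub, if_neg hne]
      exact inf_le_left
    · intro ℓ _
      exact ⟨le_sup_left, B_le_one _⟩

end Aux

/-- The set of vectors `x_L ≥ λ·1_L` with `A_{L₁L} ⊗ x_L = λ·1_{L₁}` and
`(A_{KK})* ⊗ A_{KL} ⊗ x_L ≤ λ·1_K` equals
`S_L(λ) = {x_L : x_ℓ = λ for ℓ ∈ L', λ ≤ x_ℓ ≤ 1 for ℓ ∈ L̃}`, which equals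
`{λ·1_L ⊕ Λ_{L,L̃} ⊗ z : z ∈ B^{|L̃|}}`. -/


theorem stmt15 {n : ℕ} (A : Matrix (Fin n) (Fin n) B) (lam : B) (K L : Finset (Fin n))
    (hU : K ∪ L = Finset.univ) (hD : Disjoint K L) (xL : ↥L → B) :
    (((∀ i, lam ≤ xL i) ∧
      (∀ i : ↥(L1set A lam L), mmVec (subM A (L1set A lam L) L) xL i = lam) ∧
      (∀ i : ↥K, mmVec (mmMul (mmStar (subM A K K)) (subM A K L)) xL i ≤ lam)) ↔
        ((∀ ℓ : ↥L, (ℓ : Fin n) ∈ LprimeSet A lam K L → xL ℓ = lam) ∧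
         (∀ ℓ : ↥L, (ℓ : Fin n) ∈ LtilSet A lam K L → lam ≤ xL ℓ ∧ xL ℓ ≤ 1))) ∧
    (((∀ i, lam ≤ xL i) ∧
      (∀ i : ↥(L1set A lam L), mmVec (subM A (L1set A lam L) L) xL i = lam) ∧
      (∀ i : ↥K, mmVec (mmMul (mmStar (subM A K K)) (subM A K L)) xL i ≤ lam)) ↔
        ∃ z : ↥(LtilSet A lam K L) → B,
          xL = fun ℓ => lam ⊔ mmVec (LamSub lam L (LtilSet A lam K L)) z ℓ) := by
  constructor
  · exact lemA A lam K L xL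
  · exact (lemA A lam K L xL).trans (lemB A lam K L xL)
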